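/- Let f and I be expectations with I ⪯ Φ_f(I) (I is a subinvariant) and Φ_fⁿ(I)(s) < ∞ for all n ∈ ℕ and s ∈ Σ. Then for every initial state s, the induced process (X_n^{f,I})_{n ∈ ℕ} is a submartingale with respect to (G_n)_{n ∈ ℕ} under P_s: each X_n^{f,I} is G_n-measurable with ∫_Ω X_n^{f,I} dP_s < ∞, and for every n ∈ ℕ and every G ∈ G_n, ∫_G X_n^{f,I} dP_s ≤ ∫_G X_{n+1}^{f,I} dP_s. -/

import Mathlib

open MeasureTheory Filter Topology
open scoped Classical ENNReal ENat NNReal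

/-! Loop model: states `S`, guard `φ : Set S`, loop-body transition probabilities
`μ : S → S → ℝ≥0`. Expectations are functions `S → ℝ≥0∞` with the pointwise order. -/

variable {S : Type*}

/-- One-step weakest preexpectation of the loop body:
`wpF μ X s = ∑_{s'} μ s s' * X s'`. -/
noncomputable def wpF (μ : S → S → ℝ≥0) (X : S → ℝ≥0∞) (s : S) : ℝ≥0∞ :=
  ∑' s', (μ s s' : ℝ≥0∞) * X s'

/-- The characteristic function `Φ_f` of the loop `while φ do C` with respect to the
postexpectation `f`. -/
noncomputable def Phi (φ : Set S) (μ : S → S → ℝ≥0) (f : S → ℝ≥0∞)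
    (X : S → ℝ≥0∞) (s : S) : ℝ≥0∞ :=
  if s ∈ φ then wpF μ X s else f s

theorem Phi_mono (φ : Set S) (μ : S → S → ℝ≥0) (f : S → ℝ≥0∞) :
    Monotone (Phi φ μ f) := by
  intro X Y h s
  unfold Phi wpF
  split_ifs with hs
  · exact ENNReal.tsum_le_tsum fun s' => by gcongr; exact h s'
  · exact le_rfl

/-- Least fixed point of the characteristic function `Φ_f`,
i.e. the weakest preexpectation `wp(while φ do C)(f)`. -/
noncomputable def lfpPhi (φ : Set S) (μ : S → S → ℝ≥0) (f : S → ℝ≥0∞) : S → ℝ≥0∞ :=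
  OrderHom.lfp ⟨Phi φ μ f, Phi_mono φ μ f⟩

/-- A finite expectation: `X s < ∞` for all states. -/
def FinExp (X : S → ℝ≥0∞) : Prop := ∀ s, X s < ⊤

/-- A bounded expectation: `X s ≤ c` for some constant `c : ℝ≥0`. -/
def BddExp (X : S → ℝ≥0∞) : Prop := ∃ c : ℝ≥0, ∀ s, X s ≤ (c : ℝ≥0∞)

/-- `I` harmonizes with `f` if `I` agrees with `f` on all terminal states (states
outside the guard). -/
def Harmonizes (φ : Set S) (I f : S → ℝ≥0∞) : Prop := ∀ s ∉ φ, I s = f s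

/-- `ΔI`: the expected change of `I` within one loop iteration. -/
noncomputable def dExp (φ : Set S) (μ : S → S → ℝ≥0) (I : S → ℝ≥0∞) (s : S) : ℝ≥0∞ :=
  if s ∈ φ then ∑' s', (μ s s' : ℝ≥0∞) * ((I s' - I s) ⊔ (I s - I s')) else 0

/-- `I` is conditionally difference bounded if `ΔI` is bounded by a constant. -/
def CondDiffBdd (φ : Set S) (μ : S → S → ℝ≥0) (I : S → ℝ≥0∞) : Prop :=
  ∃ c : ℝ≥0, ∀ s, dExp φ μ I s ≤ (c : ℝ≥0∞)

/-! The loop space `Ω := ℕ → S` with its product σ-algebra (`S` discrete). -/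

/-- The cylinder set of a finite sequence of states. -/
def Cyl (π : List S) : Set (ℕ → S) := {ϑ | ∀ i : Fin π.length, ϑ i = π.get i}

/-- The σ-algebra `F_n`, generated by the cylinder sets of sequences of length `n+1`. -/
def Fn (n : ℕ) : MeasurableSpace (ℕ → S) :=
  MeasurableSpace.generateFrom {A | ∃ π : List S, π.length = n + 1 ∧ A = Cyl π}

/-- The shifted filtration `G_n := F_{n+1}`. -/
def Gn (n : ℕ) : MeasurableSpace (ℕ → S) := Fn (n + 1)

/-- One-step transition probability of the loop: from a state `a` inside the guard move
according to `μ`; a state outside the guard is absorbing. -/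
noncomputable def stepP (φ : Set S) (μ : S → S → ℝ≥0) (a b : S) : ℝ≥0 :=
  if a ∈ φ then μ a b else if b = a then 1 else 0

/-- Product of the one-step transition probabilities along a finite sequence. -/
noncomputable def chainP (φ : Set S) (μ : S → S → ℝ≥0) : List S → ℝ≥0
  | [] => 1
  | [_] => 1
  | a :: b :: rest => stepP φ μ a b * chainP φ μ (b :: rest)

/-- The prefix probability `p_s(π)` of the finite sequence `π` of states, starting the
loop in the state `s`. -/
noncomputable def prefP (φ : Set S) (μ : S → S → ℝ≥0) (s : S) (π : List S) : ℝ≥0 :=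
  (if π.head? = some s then 1 else 0) * chainP φ μ π

/-- The looping time `τ`: the first time the run leaves the guard. -/
noncomputable def loopT (φ : Set S) (ϑ : ℕ → S) : ℕ∞ :=
  sInf {n : ℕ∞ | ∃ m : ℕ, n = (m : ℕ∞) ∧ ϑ m ∉ φ}

/-- The stochastic process `X_n^{f,I}` induced by the invariant `I` (w.r.t. the
postexpectation `f`). -/
noncomputable def Xn (φ : Set S) (f I : S → ℝ≥0∞) (n : ℕ) (ϑ : ℕ → S) : ℝ≥0∞ :=
  if loopT φ ϑ ≤ (n : ℕ∞) then f (ϑ (loopT φ ϑ).toNat) else I (ϑ (n + 1))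

/-- The stopped process `X_τ^f`. -/
noncomputable def Xstop (φ : Set S) (f : S → ℝ≥0∞) (ϑ : ℕ → S) : ℝ≥0∞ :=
  if loopT φ ϑ < ⊤ then f (ϑ (loopT φ ϑ).toNat) else 0

/-! ### Auxiliary development -/

section Aux

variable {φ : Set S} {μ : S → S → ℝ≥0}

/-- Extension of a finite sequence to an infinite one, repeating the last value. -/
def extF (m : ℕ) (v : Fin (m + 1) → S) : ℕ → S := fun k => v ⟨min k m, by omega⟩

lemma extF_le {m : ℕ} (v : Fin (m + 1) → S) {k : ℕ} (h : k ≤ m) :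
    extF m v k = v ⟨k, by omega⟩ := by
  unfold extF
  congr 1
  exact Fin.ext (Nat.min_eq_left h)

/-! #### looping time -/

lemma loopT_eq_find {ϑ : ℕ → S} (h : ∃ k, ϑ k ∉ φ) :
    loopT φ ϑ = (Nat.find h : ℕ∞) := by
  unfold loopT
  apply le_antisymm
  · exact sInf_le ⟨Nat.find h, rfl, Nat.find_spec h⟩
  · apply le_sInf
    rintro x ⟨m, rfl, hm⟩
    exact_mod_cast Nat.find_le hm

lemma loopT_eq_top {ϑ : ℕ → S} (h : ∀ k, ϑ k ∈ φ) : loopT φ ϑ = ⊤ := by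
  unfold loopT
  have : {n : ℕ∞ | ∃ m : ℕ, n = (m : ℕ∞) ∧ ϑ m ∉ φ} = ∅ := by
    ext x; simp only [Set.mem_setOf_eq, Set.mem_empty_iff_false, iff_false]
    rintro ⟨m, rfl, hm⟩; exact hm (h m)
  rw [this, sInf_empty]

lemma loopT_le_iff {ϑ : ℕ → S} {m : ℕ} :
    loopT φ ϑ ≤ (m : ℕ∞) ↔ ∃ k ≤ m, ϑ k ∉ φ := by
  constructor
  · intro h
    by_cases he : ∃ k, ϑ k ∉ φ
    · rw [loopT_eq_find he] at h
      exact ⟨Nat.find he, by exact_mod_cast h, Nat.find_spec he⟩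
    · push_neg at he
      rw [loopT_eq_top he] at h
      simp at h
  · rintro ⟨k, hk, hφ⟩
    have h1 : loopT φ ϑ ≤ (k : ℕ∞) := sInf_le ⟨k, rfl, hφ⟩
    exact h1.trans (by exact_mod_cast hk)

lemma loopT_spec {ϑ : ℕ → S} {m : ℕ} (h : loopT φ ϑ ≤ (m : ℕ∞)) :
    (loopT φ ϑ).toNat ≤ m ∧ ϑ (loopT φ ϑ).toNat ∉ φ := by
  obtain ⟨k, hk, hφ⟩ := loopT_le_iff.1 h
  have he : ∃ j, ϑ j ∉ φ := ⟨k, hφ⟩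
  rw [loopT_eq_find he]
  simp only [ENat.toNat_coe]
  exact ⟨(Nat.find_le hφ).trans hk, Nat.find_spec he⟩

lemma loopT_agree {ϑ ϑ' : ℕ → S} {m : ℕ} (hag : ∀ k ≤ m, ϑ k = ϑ' k)
    (h : loopT φ ϑ ≤ (m : ℕ∞)) : loopT φ ϑ' = loopT φ ϑ := by
  obtain ⟨k, hk, hφ⟩ := loopT_le_iff.1 h
  have he : ∃ j, ϑ j ∉ φ := ⟨k, hφ⟩
  have he' : ∃ j, ϑ' j ∉ φ := ⟨k, by rw [← hag k hk]; exact hφ⟩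
  have hfm : Nat.find he ≤ m := (Nat.find_le hφ).trans hk
  rw [loopT_eq_find he, loopT_eq_find he']
  have h1 : Nat.find he' ≤ Nat.find he :=
    Nat.find_le (by rw [← hag _ hfm]; exact Nat.find_spec he)
  have h2 : Nat.find he ≤ Nat.find he' :=
    Nat.find_le (by rw [hag _ (h1.trans hfm)]; exact Nat.find_spec he')
  exact_mod_cast le_antisymm h1 h2

lemma Xn_agree {f J : S → ℝ≥0∞} {n : ℕ} {ϑ ϑ' : ℕ → S}
    (hag : ∀ k ≤ n + 1, ϑ k = ϑ' k) : Xn φ f J n ϑ = Xn φ f J n ϑ' := by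
  have hag' : ∀ k ≤ n, ϑ k = ϑ' k := fun k hk => hag k (hk.trans (Nat.le_succ n))
  unfold Xn
  by_cases h : loopT φ ϑ ≤ (n : ℕ∞)
  · have heq := loopT_agree hag' h
    obtain ⟨ht1, _⟩ := loopT_spec h
    rw [if_pos h, heq, if_pos h, hag _ (ht1.trans (Nat.le_succ n))]
  · have h' : ¬ loopT φ ϑ' ≤ (n : ℕ∞) := by
      intro hc
      exact h (loopT_agree (fun k hk => (hag' k hk).symm) hc ▸ hc)
    rw [if_neg h, if_neg h', hag (n + 1) le_rfl]

/-! #### cylinders -/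

lemma mem_Cyl_ofFn {m : ℕ} (v : Fin m → S) (ϑ : ℕ → S) :
    ϑ ∈ Cyl (List.ofFn v) ↔ ∀ i : Fin m, ϑ i = v i := by
  unfold Cyl
  simp only [Set.mem_setOf_eq]
  constructor
  · intro h i
    have := h (Fin.cast (List.length_ofFn (f := v)).symm i)
    rwa [List.get_ofFn] at this
  · intro h i
    rw [List.get_ofFn]
    exact h (Fin.cast (List.length_ofFn (f := v)) i)

lemma Cyl_measurable [MeasurableSpace S] [DiscreteMeasurableSpace S] (π : List S) :
    MeasurableSet (Cyl π) := by
  have : Cyl π = ⋂ i : Fin π.length, (fun ϑ : ℕ → S => ϑ i) ⁻¹' {π.get i} := by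
    ext ϑ; simp [Cyl]
  rw [this]
  exact MeasurableSet.iInter fun i =>
    (measurable_pi_apply _) (measurableSet_singleton _)

lemma Fn_le_pi [MeasurableSpace S] [DiscreteMeasurableSpace S] (m : ℕ) :
    Fn (S := S) m ≤ MeasurableSpace.pi := by
  apply MeasurableSpace.generateFrom_le
  rintro A ⟨π, -, rfl⟩
  exact Cyl_measurable π

lemma Cyl_mem_Fn {m : ℕ} (π : List S) (h : π.length = m + 1) :
    MeasurableSet[Fn m] (Cyl π) :=
  MeasurableSpace.measurableSet_generateFrom ⟨π, h, rfl⟩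

lemma Cyl_disjoint (m : ℕ) :
    Pairwise (Function.onFun Disjoint fun v : Fin m → S => Cyl (List.ofFn v)) := by
  intro v w hvw
  rw [Function.onFun, Set.disjoint_left]
  intro ϑ hv hw
  apply hvw
  funext i
  rw [← (mem_Cyl_ofFn v ϑ).1 hv i, (mem_Cyl_ofFn w ϑ).1 hw i]

lemma Cyl_cover (m : ℕ) :
    ⋃ v : Fin m → S, Cyl (List.ofFn v) = Set.univ := by
  ext ϑ
  simp only [Set.mem_iUnion, Set.mem_univ, iff_true]
  exact ⟨fun i => ϑ i, (mem_Cyl_ofFn _ _).2 fun i => rfl⟩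

lemma ofFn_snoc {m : ℕ} (v : Fin (m + 1) → S) (b : S) :
    List.ofFn (Fin.snoc v b) = List.ofFn v ++ [b] := by
  rw [List.ofFn_succ']
  simp [Fin.snoc_castSucc, List.concat_eq_append]

lemma Cyl_snoc {m : ℕ} (v : Fin (m + 1) → S) :
    Cyl (List.ofFn v) = ⋃ b : S, Cyl (List.ofFn (Fin.snoc v b)) := by
  ext ϑ
  simp only [Set.mem_iUnion, mem_Cyl_ofFn]
  constructor
  · intro h
    refine ⟨ϑ (m + 1), fun i => ?_⟩
    induction i using Fin.lastCases with
    | last => rw [Fin.snoc_last]; rfl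
    | cast i => rw [Fin.snoc_castSucc]; exact h i
  · rintro ⟨b, h⟩ i
    have := h i.castSucc
    rwa [Fin.snoc_castSucc] at this

lemma Cyl_snoc_disjoint {m : ℕ} (v : Fin (m + 1) → S) :
    Pairwise (Function.onFun Disjoint fun b : S => Cyl (List.ofFn (Fin.snoc v b))) := by
  intro b b' hbb
  rw [Function.onFun, Set.disjoint_left]
  intro ϑ hb hb'
  apply hbb
  have h1 := (mem_Cyl_ofFn _ ϑ).1 hb (Fin.last (m + 1))
  have h2 := (mem_Cyl_ofFn _ ϑ).1 hb' (Fin.last (m + 1))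
  rw [Fin.snoc_last] at h1 h2
  rw [← h1, h2]

lemma eq_ofFn_of_length {m : ℕ} (π : List S) (h : π.length = m) :
    π = List.ofFn (fun i : Fin m => π.get (Fin.cast h.symm i)) := by
  apply List.ext_get (by simp [h])
  intro k h1 h2
  rw [List.get_ofFn]
  exact congrArg π.get (Fin.ext rfl)

/-! #### set integrals over cylinders -/

lemma setLintegral_const_on [MeasurableSpace S] [DiscreteMeasurableSpace S]
    {m : ℕ} (F : (ℕ → S) → ℝ≥0∞)
    (hdep : ∀ ϑ ϑ', (∀ k ≤ m, ϑ k = ϑ' k) → F ϑ = F ϑ') (v : Fin (m + 1) → S)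
    (P : Measure (ℕ → S)) :
    ∫⁻ ϑ in Cyl (List.ofFn v), F ϑ ∂P = F (extF m v) * P (Cyl (List.ofFn v)) := by
  rw [setLIntegral_congr_fun (Cyl_measurable _)
    ((fun ϑ hϑ => hdep ϑ (extF m v) fun k hk => by
      rw [extF_le v hk]
      exact (mem_Cyl_ofFn v ϑ).1 hϑ ⟨k, by omega⟩)), setLIntegral_const]

lemma lintegral_partition [Countable S] [MeasurableSpace S] [DiscreteMeasurableSpace S]
    (m : ℕ) (F : (ℕ → S) → ℝ≥0∞) (P : Measure (ℕ → S)) :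
    ∫⁻ ϑ, F ϑ ∂P = ∑' v : Fin (m + 1) → S, ∫⁻ ϑ in Cyl (List.ofFn v), F ϑ ∂P := by
  conv_lhs => rw [← Measure.restrict_univ (μ := P), ← Cyl_cover (S := S) (m + 1)]
  exact lintegral_iUnion (fun v => Cyl_measurable _) (Cyl_disjoint _) F

/-! #### chain and prefix probabilities -/

lemma chainP_concat : ∀ (π : List S) (a b : S),
    chainP φ μ (π ++ [a] ++ [b]) = chainP φ μ (π ++ [a]) * stepP φ μ a b
  | [], a, b => by simp [chainP, mul_comm]
  | [c], a, b => by simp [chainP]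
  | c :: d :: rest, a, b => by
    have ih := chainP_concat (d :: rest) a b
    show stepP φ μ c d * chainP φ μ ((d :: rest) ++ [a] ++ [b]) = _
    rw [ih]
    show _ = (stepP φ μ c d * chainP φ μ ((d :: rest) ++ [a])) * stepP φ μ a b
    ring

lemma prefP_snoc {m : ℕ} (s : S) (v : Fin (m + 1) → S) (b : S) :
    prefP φ μ s (List.ofFn (Fin.snoc v b)) =
      prefP φ μ s (List.ofFn v) * stepP φ μ (v (Fin.last m)) b := by
  rw [ofFn_snoc]
  have hsplit : List.ofFn v
      = (List.ofFn fun i : Fin m => v i.castSucc) ++ [v (Fin.last m)] := by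
    rw [List.ofFn_succ']
    simp [List.concat_eq_append]
  have hh : (List.ofFn v ++ [b]).head? = (List.ofFn v).head? := by
    rw [List.ofFn_succ]
    rfl
  have hc : chainP φ μ (List.ofFn v ++ [b])
      = chainP φ μ (List.ofFn v) * stepP φ μ (v (Fin.last m)) b := by
    conv_lhs => rw [hsplit]
    rw [chainP_concat, ← hsplit]
  unfold prefP
  rw [hh, hc]
  ring

/-! #### the value of `Xn` on a cylinder -/

variable (φ μ) in
/-- Value of the conditional expectation of `X_m` given the first `m+1` coordinates. -/
noncomputable def cV (f J : S → ℝ≥0∞) (m : ℕ) (v : Fin (m + 1) → S) : ℝ≥0∞ :=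
  if loopT φ (extF m v) ≤ (m : ℕ∞) then f ((extF m v) (loopT φ (extF m v)).toNat)
  else wpF μ J (v (Fin.last m))

lemma measurable_of_dep [Countable S] {m : ℕ} (F : (ℕ → S) → ℝ≥0∞)
    (hdep : ∀ ϑ ϑ', (∀ k ≤ m, ϑ k = ϑ' k) → F ϑ = F ϑ') :
    Measurable[Fn m] F := by
  intro B _
  have : F ⁻¹' B = ⋃ (v : Fin (m + 1) → S) (_ : F (extF m v) ∈ B),
      Cyl (List.ofFn v) := by
    ext ϑ
    simp only [Set.mem_preimage, Set.mem_iUnion]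
    constructor
    · intro h
      refine ⟨fun i => ϑ i, ?_, (mem_Cyl_ofFn _ _).2 fun i => rfl⟩
      have : F (extF m fun i : Fin (m + 1) => ϑ i) = F ϑ := by
        apply hdep
        intro k hk
        rw [extF_le _ hk]
      rwa [this]
    · rintro ⟨v, hvB, hϑ⟩
      have : F ϑ = F (extF m v) := by
        apply hdep
        intro k hk
        rw [extF_le _ hk]
        exact (mem_Cyl_ofFn v ϑ).1 hϑ ⟨k, by omega⟩
      rwa [this]
  rw [this]
  exact MeasurableSet.iUnion fun v => MeasurableSet.iUnion fun _ => Cyl_mem_Fn _ (by simp)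

lemma extF_snoc_agree {m : ℕ} (v : Fin (m + 1) → S) (b : S) :
    ∀ k ≤ m, extF (m + 1) (Fin.snoc v b) k = extF m v k := by
  intro k hk
  rw [extF_le _ (by omega : k ≤ m + 1), extF_le _ hk]
  have h1 : (⟨k, by omega⟩ : Fin (m + 2)) = Fin.castSucc ⟨k, by omega⟩ := Fin.ext rfl
  rw [h1, Fin.snoc_castSucc]

lemma extF_snoc_last {m : ℕ} (v : Fin (m + 1) → S) (b : S) :
    extF (m + 1) (Fin.snoc v b) (m + 1) = b := by
  rw [extF_le _ le_rfl]
  have h1 : (⟨m + 1, by omega⟩ : Fin (m + 2)) = Fin.last (m + 1) := Fin.ext rfl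
  rw [h1, Fin.snoc_last]

lemma Xn_ext_snoc {f J : S → ℝ≥0∞} {m : ℕ} (v : Fin (m + 1) → S) (b : S) :
    Xn φ f J m (extF (m + 1) (Fin.snoc v b)) =
      if loopT φ (extF m v) ≤ (m : ℕ∞) then
        f ((extF m v) (loopT φ (extF m v)).toNat)
      else J b := by
  set ϑv := extF m v with hϑv
  set ϑb := extF (m + 1) (Fin.snoc v b) with hϑb
  have hag : ∀ k ≤ m, ϑv k = ϑb k := fun k hk => (extF_snoc_agree v b k hk).symm
  by_cases h : loopT φ ϑv ≤ (m : ℕ∞)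
  · have heq : loopT φ ϑb = loopT φ ϑv := loopT_agree hag h
    obtain ⟨ht1, -⟩ := loopT_spec h
    rw [if_pos h]
    unfold Xn
    rw [heq, if_pos h, ← hag _ ht1]
  · have h' : ¬ loopT φ ϑb ≤ (m : ℕ∞) := by
      intro hc
      have heq := loopT_agree (fun k hk => (hag k hk).symm) hc
      exact h (by rw [heq]; exact hc)
    rw [if_neg h]
    unfold Xn
    rw [if_neg h']
    congr 1
    exact extF_snoc_last v b

variable [Countable S] [MeasurableSpace S] [DiscreteMeasurableSpace S]

lemma key (f J : S → ℝ≥0∞) (Q : Measure (ℕ → S)) (s : S)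
    (hQ : ∀ π : List S, π ≠ [] → Q (Cyl π) = (prefP φ μ s π : ℝ≥0∞))
    (m : ℕ) (v : Fin (m + 1) → S) :
    ∫⁻ ϑ in Cyl (List.ofFn v), Xn φ f J m ϑ ∂Q
      = cV φ μ f J m v * Q (Cyl (List.ofFn v)) := by
  rw [Cyl_snoc v, lintegral_iUnion (fun b => Cyl_measurable _) (Cyl_snoc_disjoint v)]
  have hconst : ∀ b : S, ∫⁻ ϑ in Cyl (List.ofFn (Fin.snoc v b)), Xn φ f J m ϑ ∂Q
      = Xn φ f J m (extF (m + 1) (Fin.snoc v b)) * Q (Cyl (List.ofFn (Fin.snoc v b))) :=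
    fun b => setLintegral_const_on _ (fun ϑ ϑ' h => Xn_agree h) _ Q
  simp_rw [hconst, Xn_ext_snoc]
  by_cases h : loopT φ (extF m v) ≤ (m : ℕ∞)
  · simp_rw [if_pos h]
    rw [ENNReal.tsum_mul_left,
      ← measure_iUnion (Cyl_snoc_disjoint v) (fun b => Cyl_measurable _), ← Cyl_snoc]
    unfold cV
    rw [if_pos h]
  · simp_rw [if_neg h]
    have hall : v (Fin.last m) ∈ φ := by
      by_contra hb
      apply h
      apply loopT_le_iff.2 ⟨m, le_rfl, ?_⟩
      rw [extF_le _ le_rfl]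
      exact hb
    have hQc : ∀ b : S, Q (Cyl (List.ofFn (Fin.snoc v b)))
        = (prefP φ μ s (List.ofFn v) : ℝ≥0∞) * (μ (v (Fin.last m)) b : ℝ≥0∞) := by
      intro b
      rw [hQ _ (by simp), prefP_snoc]
      rw [ENNReal.coe_mul]
      congr 1
      unfold stepP
      rw [if_pos hall]
    simp_rw [hQc]
    have hre : ∀ b : S, J b * ((prefP φ μ s (List.ofFn v) : ℝ≥0∞)
          * (μ (v (Fin.last m)) b : ℝ≥0∞))
        = (prefP φ μ s (List.ofFn v) : ℝ≥0∞) * ((μ (v (Fin.last m)) b : ℝ≥0∞) * J b) :=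
      fun b => by ring
    simp_rw [hre]
    rw [ENNReal.tsum_mul_left]
    unfold cV
    rw [if_neg h, ← Cyl_snoc, hQ _ (by simp), mul_comm]
    rfl

lemma cV_succ (f J : S → ℝ≥0∞) (n : ℕ) (v : Fin (n + 2) → S) :
    cV φ μ f J (n + 1) v = Xn φ f (Phi φ μ f J) n (extF (n + 1) v) := by
  set ϑ := extF (n + 1) v with hϑ
  have hlast : ϑ (n + 1) = v (Fin.last (n + 1)) := by
    rw [hϑ, extF_le _ le_rfl]
    exact congrArg v (Fin.ext rfl)
  unfold cV Xn
  by_cases h : loopT φ ϑ ≤ ((n + 1 : ℕ) : ℕ∞)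
  · rw [if_pos h]
    by_cases h0 : loopT φ ϑ ≤ (n : ℕ∞)
    · rw [if_pos h0]
    · rw [if_neg h0]
      have htop : loopT φ ϑ ≠ ⊤ := ne_top_of_le_ne_top (ENat.coe_ne_top _) h
      have hco : ((loopT φ ϑ).toNat : ℕ∞) = loopT φ ϑ := ENat.coe_toNat htop
      obtain ⟨ht1, ht2⟩ := loopT_spec h
      have ht3 : (loopT φ ϑ).toNat = n + 1 := by
        rcases Nat.lt_or_ge (loopT φ ϑ).toNat (n + 1) with hlt | hge
        · exact absurd (by rw [← hco]; exact_mod_cast Nat.lt_succ_iff.1 hlt) h0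
        · omega
      rw [ht3] at ht2 ⊢
      unfold Phi
      rw [if_neg ht2]
  · rw [if_neg h]
    have h0 : ¬ loopT φ ϑ ≤ (n : ℕ∞) := fun hc =>
      h (hc.trans (by exact_mod_cast Nat.le_succ n))
    rw [if_neg h0]
    have hin : ϑ (n + 1) ∈ φ := by
      by_contra hb
      exact h (loopT_le_iff.2 ⟨n + 1, le_rfl, hb⟩)
    unfold Phi
    rw [if_pos hin, hlast]

lemma cV_zero (f J : S → ℝ≥0∞) (v : Fin 1 → S) :
    cV φ μ f J 0 v = Phi φ μ f J (v 0) := by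
  have hext : ∀ k, extF 0 v k = v 0 := fun k => by
    unfold extF
    exact congrArg v (Fin.ext (Nat.min_zero k))
  unfold cV Phi
  by_cases h : v 0 ∈ φ
  · have hno : ¬ loopT φ (extF 0 v) ≤ ((0 : ℕ) : ℕ∞) := by
      intro hc
      obtain ⟨k, hk, hkφ⟩ := loopT_le_iff.1 hc
      rw [hext k] at hkφ
      exact hkφ h
    rw [if_neg hno, if_pos h]
    congr 1
  · have hyes : loopT φ (extF 0 v) ≤ ((0 : ℕ) : ℕ∞) :=
      loopT_le_iff.2 ⟨0, le_rfl, by rw [hext 0]; exact h⟩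
    rw [if_pos hyes, if_neg h, hext]

lemma intXn (f : S → ℝ≥0∞) (Q : Measure (ℕ → S)) (s : S)
    (hQ : ∀ π : List S, π ≠ [] → Q (Cyl π) = (prefP φ μ s π : ℝ≥0∞)) :
    ∀ (m : ℕ) (J : S → ℝ≥0∞), ∫⁻ ϑ, Xn φ f J m ϑ ∂Q = (Phi φ μ f)^[m + 1] J s
  | 0, J => by
    rw [lintegral_partition 0 _ Q]
    have hkey : ∀ v : Fin 1 → S, ∫⁻ ϑ in Cyl (List.ofFn v), Xn φ f J 0 ϑ ∂Q
        = cV φ μ f J 0 v * Q (Cyl (List.ofFn v)) := fun v => key f J Q s hQ 0 v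
    simp_rw [hkey]
    rw [tsum_eq_single (fun _ : Fin 1 => s) ?_]
    · have h1 : Q (Cyl (List.ofFn fun _ : Fin 1 => s)) = 1 := by
        rw [hQ _ (by simp)]
        have he : List.ofFn (fun _ : Fin 1 => s) = [s] := by simp [List.ofFn_succ]
        rw [he]
        unfold prefP
        simp [chainP]
      rw [h1, mul_one, cV_zero, Function.iterate_one]
    · intro v hv
      have hv0 : v 0 ≠ s := fun hc => hv (funext fun i => by
        rw [Subsingleton.elim i 0]; exact hc)
      have h0 : Q (Cyl (List.ofFn v)) = 0 := by
        rw [hQ _ (by simp)]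
        have he : List.ofFn v = [v 0] := by simp [List.ofFn_succ]
        rw [he]
        unfold prefP
        simp [hv0]
      rw [h0, mul_zero]
  | (m + 1), J => by
    rw [lintegral_partition (m + 1) _ Q]
    have step : ∀ v : Fin (m + 2) → S,
        ∫⁻ ϑ in Cyl (List.ofFn v), Xn φ f J (m + 1) ϑ ∂Q
          = ∫⁻ ϑ in Cyl (List.ofFn v), Xn φ f (Phi φ μ f J) m ϑ ∂Q := by
      intro v
      rw [key f J Q s hQ (m + 1) v, cV_succ f J m v,
        setLintegral_const_on _ (fun ϑ ϑ' h => Xn_agree h) v Q]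
    simp_rw [step]
    rw [← lintegral_partition (m + 1) _ Q, intXn f Q s hQ m (Phi φ μ f J),
      ← Function.iterate_succ_apply]

end Aux

/-- **A subinvariant induces a submartingale.** If `I ⪯ Φ_f(I)` and all iterates
`Φ_fⁿ(I)` are finite, then for every initial state `s` the process `(X_n^{f,I})_n` is a
submartingale w.r.t. `(G_n)_n` under `P_s`. -/
theorem subinvariant_submartingale {S : Type*} [Countable S] [MeasurableSpace S] [DiscreteMeasurableSpace S]
    (φ : Set S) (μ : S → S → ℝ≥0) (hμ : ∀ s, ∑' s', μ s s' = 1)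
    (P : S → Measure (ℕ → S)) (hP : ∀ s, IsProbabilityMeasure (P s))
    (hPC : ∀ (s : S) (π : List S), π ≠ [] → P s (Cyl π) = (prefP φ μ s π : ℝ≥0∞))
    (f I : S → ℝ≥0∞) (hsub : I ≤ Phi φ μ f I)
    (hfin : ∀ n : ℕ, FinExp ((Phi φ μ f)^[n] I)) (s : S) (n : ℕ) :
    Measurable[Gn n] (Xn φ f I n) ∧
    (∫⁻ ϑ, Xn φ f I n ϑ ∂(P s)) < ⊤ ∧
    ∀ G : Set (ℕ → S), MeasurableSet[Gn n] G →
      ∫⁻ ϑ in G, Xn φ f I n ϑ ∂(P s) ≤ ∫⁻ ϑ in G, Xn φ f I (n + 1) ϑ ∂(P s) := by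
  have hQ : ∀ π : List S, π ≠ [] → P s (Cyl π) = (prefP φ μ s π : ℝ≥0∞) :=
    fun π h => hPC s π h
  refine ⟨measurable_of_dep _ (fun ϑ ϑ' h => Xn_agree h), ?_, ?_⟩
  · rw [intXn f (P s) s hQ n I]
    exact hfin (n + 1) s
  · intro G hG
    -- the one-step conditional expectation of `X_{n+1}` is `Xn` with invariant `Φ_f I`
    set Y : (ℕ → S) → ℝ≥0∞ := Xn φ f (Phi φ μ f I) n with hY
    have hpt : ∀ ϑ, Xn φ f I n ϑ ≤ Y ϑ := by
      intro ϑ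
      rw [hY]
      unfold Xn
      split_ifs with h
      · exact le_rfl
      · exact hsub _
    refine le_trans (lintegral_mono hpt) (le_of_eq ?_)
    -- totals
    have hfinY : ∫⁻ ϑ, Y ϑ ∂(P s) = (Phi φ μ f)^[n + 2] I s := by
      rw [hY, intXn f (P s) s hQ n (Phi φ μ f I), ← Function.iterate_succ_apply]
    have hfinX : ∫⁻ ϑ, Xn φ f I (n + 1) ϑ ∂(P s) = (Phi φ μ f)^[n + 2] I s :=
      intXn f (P s) s hQ (n + 1) I
    have htot : (Phi φ μ f)^[n + 2] I s ≠ ⊤ := (hfin (n + 2) s).ne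
    -- π-system induction over the generating cylinders of `G_n`
    refine MeasurableSpace.induction_on_inter
      (m := Gn n) (C := fun G _ => ∫⁻ ϑ in G, Y ϑ ∂(P s) = ∫⁻ ϑ in G, Xn φ f I (n + 1) ϑ ∂(P s))
      (s := {A | ∃ π : List S, π.length = (n + 1) + 1 ∧ A = Cyl π})
      rfl ?h_inter ?empty ?basic ?compl ?iUnion G hG
    case h_inter =>
      intro A hA B hB hne
      obtain ⟨π, hπ, rfl⟩ := hA
      obtain ⟨π', hπ', rfl⟩ := hB
      obtain ⟨ϑ, hϑ1, hϑ2⟩ := hne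
      have hpp : π = π' := by
        apply List.ext_get (by rw [hπ, hπ'])
        intro k h1 h2
        exact (hϑ1 ⟨k, h1⟩).symm.trans (hϑ2 ⟨k, h2⟩)
      subst hpp
      rw [Set.inter_self]
      exact ⟨π, hπ, rfl⟩
    case empty => simp
    case basic =>
      intro A hA
      obtain ⟨π, hπ, rfl⟩ := hA
      rw [eq_ofFn_of_length π hπ]
      rw [key f I (P s) s hQ (n + 1) _, cV_succ, hY,
        setLintegral_const_on _ (fun ϑ ϑ' h => Xn_agree h) _ (P s)]
    case compl =>
      intro t htm hC
      have htm' : MeasurableSet t := Fn_le_pi (n + 1) t htm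
      have h1 := lintegral_add_compl (μ := P s) Y htm'
      have h2 := lintegral_add_compl (μ := P s) (fun ϑ => Xn φ f I (n + 1) ϑ) htm'
      have hYfin : ∫⁻ ϑ in t, Y ϑ ∂(P s) ≠ ⊤ :=
        ne_top_of_le_ne_top (by rw [hfinY]; exact htot)
          (setLIntegral_le_lintegral t Y)
      refine (ENNReal.add_right_inj hYfin).1 ?_
      calc ∫⁻ ϑ in t, Y ϑ ∂(P s) + ∫⁻ ϑ in tᶜ, Y ϑ ∂(P s)
          = (Phi φ μ f)^[n + 2] I s := by rw [h1, hfinY]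
        _ = ∫⁻ ϑ in t, Xn φ f I (n + 1) ϑ ∂(P s)
              + ∫⁻ ϑ in tᶜ, Xn φ f I (n + 1) ϑ ∂(P s) := by rw [h2, hfinX]
        _ = ∫⁻ ϑ in t, Y ϑ ∂(P s) + ∫⁻ ϑ in tᶜ, Xn φ f I (n + 1) ϑ ∂(P s) := by
              rw [hC]
    case iUnion =>
      intro g hd hm hC
      have hm' : ∀ i, MeasurableSet (g i) := fun i => Fn_le_pi (n + 1) (g i) (hm i)
      rw [lintegral_iUnion hm' hd, lintegral_iUnion hm' hd]
      exact tsum_congr hC
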